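/- For every n ≥ 0, the polynomial identity P_{φ^n(21)}(X) - P_{φ^n(2)}(X) = (X^{g_{n+1}+1} - X - 1) · Π_{m=0}^{n-1} (X^{|φ^m(1)|} - 1) holds, where g_n = ⌊2^{n+1}/3⌋, P_w is defined by P_{a_1⋯a_k}(X) = (-X)^k + Σ_{i=1}^k a_i(-X)^{k-i}, and φ is the morphism φ(1)=2, φ(2)=211. -/
import Mathlib


/-- The morphism φ on the alphabet {1,2}: φ(1) = 2, φ(2) = 211. -/
def phi : ℕ → List ℕ
  | 1 => [2]
  | 2 => [2, 1, 1]
  | _ => []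

/-- Extension of φ to words by concatenation. -/
def phiW (w : List ℕ) : List ℕ := w.flatMap phi

/-- The polynomial P_{a₁⋯a_k}(X) = (-X)^k + Σ_{i=1}^k a_i (-X)^{k-i}, evaluated at x. -/
def P (w : List ℕ) (x : ℝ) : ℝ :=
  (-x) ^ w.length + ∑ i ∈ Finset.range w.length, (w.getD i 0 : ℝ) * (-x) ^ (w.length - 1 - i)

/-- g_n = ⌊2^(n+1)/3⌋. -/
def g (n : ℕ) : ℕ := 2 ^ (n + 1) / 3

lemma phiW_append (u v : List ℕ) : phiW (u ++ v) = phiW u ++ phiW v := by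
  simp [phiW]

lemma iter_append (n : ℕ) (u v : List ℕ) :
    phiW^[n] (u ++ v) = phiW^[n] u ++ phiW^[n] v := by
  induction n generalizing u v with
  | zero => rfl
  | succ n ih => rw [Function.iterate_succ_apply, phiW_append, ih,
      Function.iterate_succ_apply, Function.iterate_succ_apply]

lemma iter_one (n : ℕ) : phiW^[n + 1] [1] = phiW^[n] [2] := by
  rw [Function.iterate_succ_apply]
  rfl

lemma iter_two (n : ℕ) :
    phiW^[n + 1] [2] = phiW^[n] [2] ++ phiW^[n] [1] ++ phiW^[n] [1] := by
  rw [Function.iterate_succ_apply]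
  have h2 : phiW [2] = [2] ++ [1] ++ [1] := rfl
  rw [h2, iter_append, iter_append]

/-- length of φⁿ(1) -/
def A (n : ℕ) : ℕ := (phiW^[n] [1]).length

lemma A_zero : A 0 = 1 := rfl

lemma A_one : A 1 = 1 := rfl

lemma A_succ_succ (n : ℕ) : A (n + 2) = A (n + 1) + 2 * A n := by
  have h1 : A (n + 2) = (phiW^[n + 1] [2]).length := by
    rw [A, iter_one]
  have h2 : A (n + 1) = (phiW^[n] [2]).length := by
    rw [A, iter_one]
  rw [h1, iter_two, List.length_append, List.length_append, h2, A]
  ring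

lemma A_nat (n : ℕ) : 3 * A n + 2 * (n % 2) = 2 ^ (n + 1) + 1 := by
  induction n using Nat.twoStepInduction with
  | zero => norm_num [A_zero]
  | one => norm_num [A_one]
  | more n ih1 ih2 =>
    rw [A_succ_succ]
    have hq : (2 : ℕ) ^ (n + 1 + 1) = 2 * 2 ^ (n + 1) := by ring
    have hr : (2 : ℕ) ^ (n + 2 + 1) = 2 * (2 * 2 ^ (n + 1)) := by ring
    rw [hq] at ih2
    rw [hr]
    generalize 2 ^ (n + 1) = p at ih1 ih2 ⊢
    omega

lemma A_odd (n : ℕ) : Odd (A n) := by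
  have := A_nat n
  have h2 : 2 ^ (n + 1) = 2 * 2 ^ n := by ring
  rcases Nat.even_or_odd (A n) with h | h
  · exfalso; obtain ⟨k, hk⟩ := h; omega
  · exact h

lemma pow2_ex (n : ℕ) : ∃ k, 2 ^ (n + 1) = 3 * k + 2 - n % 2 := by
  induction n with
  | zero => exact ⟨0, rfl⟩
  | succ n ih =>
    obtain ⟨k, hk⟩ := ih
    refine ⟨2 * k + 1 - n % 2, ?_⟩
    have hp : 2 ^ (n + 1 + 1) = 2 * 2 ^ (n + 1) := by ring
    omega

lemma g_eq (n : ℕ) : g (n + 1) + 1 = 2 * A n + n % 2 := by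
  obtain ⟨k, hk⟩ := pow2_ex (n + 1)
  have hg0 : g (n + 1) = 2 ^ (n + 2) / 3 := rfl
  have hA := A_nat n
  have hp : 2 ^ (n + 2) = 2 * 2 ^ (n + 1) := by ring
  omega

lemma exp_eq (n : ℕ) : (n + 1) % 2 + A (n + 1) = n % 2 + 2 * A n := by
  have h1 := A_nat n
  have h2 := A_nat (n + 1)
  have hp : 2 ^ (n + 2) = 2 * 2 ^ (n + 1) := by ring
  omega

lemma P_nil (x : ℝ) : P [] x = 1 := by simp [P]

lemma P_cons (a : ℕ) (w : List ℕ) (x : ℝ) :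
    P (a :: w) x = P w x + (-x) ^ w.length * (-x + (a : ℝ) - 1) := by
  simp only [P, List.length_cons, Finset.sum_range_succ', List.getD_cons_succ,
    List.getD_cons_zero]
  have h : ∀ i : ℕ, w.length + 1 - 1 - (i + 1) = w.length - 1 - i := fun i => by omega
  have h0 : w.length + 1 - 1 - 0 = w.length := by omega
  simp only [h, h0]
  ring

lemma P_append (u v : List ℕ) (x : ℝ) :
    P (u ++ v) x = (-x) ^ v.length * (P u x - 1) + P v x := by
  induction u with
  | nil => simp [P_nil]
  | cons a u ih =>
    rw [List.cons_append, P_cons, ih, P_cons, List.length_append, pow_add]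
    ring

lemma uv (n : ℕ) (x : ℝ) :
    P (phiW^[n] [1]) x
      = 1 - x ^ ((n + 1) % 2) * ∏ m ∈ Finset.range n, (x ^ (phiW^[m] [1]).length - 1)
  ∧ P (phiW^[n] [2]) x
      = 1 - x ^ (n % 2) * ∏ m ∈ Finset.range (n + 1), (x ^ (phiW^[m] [1]).length - 1) := by
  induction n with
  | zero =>
    constructor
    · show P [1] x = _
      simp [P]
      ring
    · show P [2] x = _
      rw [Finset.prod_range_one]
      have h0 : (phiW^[0] [1]).length = 1 := rfl
      rw [h0]
      norm_num [P]
      ring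
  | succ n ih =>
    obtain ⟨hu, hv⟩ := ih
    have hodd := A_odd n
    have hneg : (-x) ^ (phiW^[n] [1]).length = -(x ^ (phiW^[n] [1]).length) :=
      hodd.neg_pow x
    constructor
    · rw [iter_one, hv]
      have h2 : (n + 1 + 1) % 2 = n % 2 := by omega
      rw [h2]
    · rw [iter_two, P_append, P_append, hu, hv, hneg,
        Finset.prod_range_succ (fun m => (x ^ (phiW^[m] [1]).length - 1)) (n + 1),
        Finset.prod_range_succ (fun m => (x ^ (phiW^[m] [1]).length - 1)) n]
      have key : x ^ (n % 2) * (x ^ (phiW^[n] [1]).length * x ^ (phiW^[n] [1]).length)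
          = x ^ ((n + 1) % 2) * x ^ ((phiW^[n + 1] [1]).length) := by
        rw [← pow_add, ← pow_add, ← pow_add]
        congr 1
        have := exp_eq n
        simp only [A] at this
        omega
      linear_combination
        (-(∏ m ∈ Finset.range n, (x ^ (phiW^[m] [1]).length - 1))
          * (x ^ (phiW^[n] [1]).length - 1)) * key

theorem P_phi_twoone_sub_two (n : ℕ) (x : ℝ) :
    P (phiW^[n] [2, 1]) x - P (phiW^[n] [2]) x
      = (x ^ (g (n + 1) + 1) - x - 1) * ∏ m ∈ Finset.range n, (x ^ (phiW^[m] [1]).length - 1) := by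
  have h21 : phiW^[n] [2, 1] = phiW^[n] [2] ++ phiW^[n] [1] := by
    have h : ([2, 1] : List ℕ) = [2] ++ [1] := rfl
    rw [h, iter_append]
  obtain ⟨hu, hv⟩ := uv n x
  rw [Finset.prod_range_succ (fun m => (x ^ (phiW^[m] [1]).length - 1)) n] at hv
  have hneg : (-x) ^ (phiW^[n] [1]).length = -(x ^ (phiW^[n] [1]).length) :=
    (A_odd n).neg_pow x
  rw [h21, P_append, hu, hv, hneg]
  have key1 : x ^ (g (n + 1) + 1)
      = x ^ (n % 2) * (x ^ (phiW^[n] [1]).length * x ^ (phiW^[n] [1]).length) := by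
    rw [← pow_add, ← pow_add]
    congr 1
    have := g_eq n
    simp only [A] at this
    omega
  have key2 : x ^ (n % 2) + x ^ ((n + 1) % 2) = x + 1 := by
    rcases Nat.even_or_odd n with h | h
    · have h0 : n % 2 = 0 := Nat.even_iff.mp h
      have h1 : (n + 1) % 2 = 1 := by omega
      rw [h0, h1, pow_zero, pow_one, add_comm]
    · have h0 : n % 2 = 1 := Nat.odd_iff.mp h
      have h1 : (n + 1) % 2 = 0 := by omega
      rw [h0, h1, pow_zero, pow_one]
  linear_combination
    (-(∏ m ∈ Finset.range n, (x ^ (phiW^[m] [1]).length - 1))) * key1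
    - (∏ m ∈ Finset.range n, (x ^ (phiW^[m] [1]).length - 1)) * key2
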